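/- Let F be an integrable, positive random variable on a probability space with E[F] = F₀ > 0 and E[|ln F|] < ∞. Then ∫_{F₀}^∞ E[(F−k)⁺]/k² dk + ∫_0^{F₀} E[(k−F)⁺]/k² dk = ln(F₀) − E[ln F]. -/

import Mathlib

open Set MeasureTheory

lemma callIntegrable (F₀ x : ℝ) (hF₀ : 0 < F₀) :
    IntegrableOn (fun k => max (x - k) 0 / k ^ 2) (Ioi F₀) := by
  set M := max x F₀ with hM
  have hFM : F₀ ≤ M := le_max_right _ _
  have h1 : IntegrableOn (fun k => max (x - k) 0 / k ^ 2) (Ioc F₀ M) := by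
    apply (ContinuousOn.integrableOn_Icc ?_).mono_set Ioc_subset_Icc_self
    apply ContinuousOn.div
    · exact ((continuous_const.sub continuous_id).max continuous_const).continuousOn
    · fun_prop
    · intro k hk
      have : 0 < k := lt_of_lt_of_le hF₀ hk.1
      positivity
  have h2 : IntegrableOn (fun k => max (x - k) 0 / k ^ 2) (Ioi M) := by
    apply (integrableOn_congr_fun ?_ measurableSet_Ioi).mpr (integrableOn_zero)
    intro k hk
    simp only [Pi.zero_apply]
    have : x - k ≤ 0 := by
      have : x ≤ M := le_max_left _ _
      simp only [mem_Ioi] at hk; linarith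
    rw [max_eq_right this, zero_div]
  have := h1.union h2
  rwa [Ioc_union_Ioi_eq_Ioi hFM] at this

lemma putIntegrable (F₀ x : ℝ) (hF₀ : 0 < F₀) (hx : 0 < x) :
    IntegrableOn (fun k => max (k - x) 0 / k ^ 2) (Ioc 0 F₀) := by
  set m := min x F₀ with hm
  have hm0 : 0 < m := lt_min hx hF₀
  have hmF : m ≤ F₀ := min_le_right _ _
  have h1 : IntegrableOn (fun k => max (k - x) 0 / k ^ 2) (Ioc 0 m) := by
    apply (integrableOn_congr_fun ?_ measurableSet_Ioc).mpr (integrableOn_zero)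
    intro k hk
    simp only [Pi.zero_apply]
    have : k - x ≤ 0 := by
      have : m ≤ x := min_le_left _ _
      have := hk.2; simp only [mem_Ioc] at hk; linarith
    rw [max_eq_right this, zero_div]
  have h2 : IntegrableOn (fun k => max (k - x) 0 / k ^ 2) (Ioc m F₀) := by
    apply (ContinuousOn.integrableOn_Icc ?_).mono_set Ioc_subset_Icc_self
    apply ContinuousOn.div
    · exact ((continuous_id.sub continuous_const).max continuous_const).continuousOn
    · fun_prop
    · intro k hk
      have : 0 < k := lt_of_lt_of_le hm0 hk.1
      positivity
  have := h1.union h2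
  rwa [Ioc_union_Ioc_eq_Ioc (le_of_lt hm0) hmF] at this

lemma callValue (F₀ x : ℝ) (hF₀ : 0 < F₀) (hx : 0 < x) :
    ∫ k in Ioi F₀, max (x - k) 0 / k ^ 2
      = if x ≤ F₀ then 0 else x / F₀ - 1 - Real.log x + Real.log F₀ := by
  rcases le_or_gt x F₀ with h | h
  · rw [if_pos h]
    rw [setIntegral_congr_fun measurableSet_Ioi (g := fun _ => (0:ℝ))]
    · simp
    · intro k hk
      simp only [mem_Ioi] at hk
      show max (x - k) 0 / k ^ 2 = 0
      rw [max_eq_right (by linarith), zero_div]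
  · rw [if_neg (not_le.mpr h)]
    have key : EqOn (fun k => max (x - k) 0 / k ^ 2)
        ((Ioc F₀ x).indicator fun k => (x - k) / k ^ 2) (Ioi F₀) := by
      intro k hk
      simp only [mem_Ioi] at hk
      show max (x - k) 0 / k ^ 2 = _
      rcases le_or_gt k x with hkx | hkx
      · rw [indicator_of_mem (show k ∈ Ioc F₀ x from ⟨hk, hkx⟩), max_eq_left (by linarith)]
      · rw [indicator_of_notMem (show k ∉ Ioc F₀ x from fun hc => absurd hc.2 (not_le.mpr hkx)),
          max_eq_right (by linarith), zero_div]
    rw [setIntegral_congr_fun measurableSet_Ioi key, setIntegral_indicator measurableSet_Ioc,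
      show Ioi F₀ ∩ Ioc F₀ x = Ioc F₀ x by rw [inter_eq_right]; exact Ioc_subset_Ioi_self,
      ← intervalIntegral.integral_of_le h.le]
    have hFTC : ∀ k ∈ Set.uIcc F₀ x, HasDerivAt (fun t => -x * t⁻¹ - Real.log t)
        ((x - k) / k ^ 2) k := by
      intro k hk
      rw [Set.uIcc_of_le h.le] at hk
      have hk0 : 0 < k := lt_of_lt_of_le hF₀ hk.1
      have h1 : HasDerivAt (fun t : ℝ => -x * t⁻¹) (-x * -(k ^ 2)⁻¹) k :=
        (hasDerivAt_inv (ne_of_gt hk0)).const_mul (-x)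
      have h2 : HasDerivAt Real.log k⁻¹ k := Real.hasDerivAt_log (ne_of_gt hk0)
      have : HasDerivAt (fun t => -x * t⁻¹ - Real.log t) (-x * -(k ^ 2)⁻¹ - k⁻¹) k := h1.sub h2
      convert this using 1
      field_simp
    rw [intervalIntegral.integral_eq_sub_of_hasDerivAt hFTC]
    · have hx0 : x ≠ 0 := ne_of_gt hx
      have hF0 : F₀ ≠ 0 := ne_of_gt hF₀
      field_simp
      ring
    · apply ContinuousOn.intervalIntegrable
      apply ContinuousOn.div
      · exact (continuous_const.sub continuous_id).continuousOn
      · fun_prop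
      · intro k hk
        rw [Set.uIcc_of_le h.le] at hk
        have : 0 < k := lt_of_lt_of_le hF₀ hk.1
        positivity

lemma putValue (F₀ x : ℝ) (hF₀ : 0 < F₀) (hx : 0 < x) :
    ∫ k in Ioc 0 F₀, max (k - x) 0 / k ^ 2
      = if F₀ ≤ x then 0 else x / F₀ - 1 - Real.log x + Real.log F₀ := by
  rcases le_or_gt F₀ x with h | h
  · rw [if_pos h]
    rw [setIntegral_congr_fun measurableSet_Ioc (g := fun _ => (0:ℝ))]
    · simp
    · intro k hk
      simp only [mem_Ioc] at hk
      show max (k - x) 0 / k ^ 2 = 0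
      rw [max_eq_right (by linarith [hk.2]), zero_div]
  · rw [if_neg (not_le.mpr h)]
    have key : EqOn (fun k => max (k - x) 0 / k ^ 2)
        ((Ioc x F₀).indicator fun k => (k - x) / k ^ 2) (Ioc 0 F₀) := by
      intro k hk
      simp only [mem_Ioc] at hk
      show max (k - x) 0 / k ^ 2 = _
      rcases lt_or_ge x k with hkx | hkx
      · rw [indicator_of_mem (show k ∈ Ioc x F₀ from ⟨hkx, hk.2⟩), max_eq_left (by linarith)]
      · rw [indicator_of_notMem (show k ∉ Ioc x F₀ from fun hc => absurd hc.1 (not_lt.mpr hkx)),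
          max_eq_right (by linarith), zero_div]
    rw [setIntegral_congr_fun measurableSet_Ioc key, setIntegral_indicator measurableSet_Ioc,
      show Ioc 0 F₀ ∩ Ioc x F₀ = Ioc x F₀ by
        rw [inter_eq_right]; exact Ioc_subset_Ioc_left (le_of_lt hx),
      ← intervalIntegral.integral_of_le h.le]
    have hFTC : ∀ k ∈ Set.uIcc x F₀, HasDerivAt (fun t => Real.log t + x * t⁻¹)
        ((k - x) / k ^ 2) k := by
      intro k hk
      rw [Set.uIcc_of_le h.le] at hk
      have hk0 : 0 < k := lt_of_lt_of_le hx hk.1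
      have h1 : HasDerivAt Real.log k⁻¹ k := Real.hasDerivAt_log (ne_of_gt hk0)
      have h2 : HasDerivAt (fun t : ℝ => x * t⁻¹) (x * -(k ^ 2)⁻¹) k :=
        (hasDerivAt_inv (ne_of_gt hk0)).const_mul x
      have : HasDerivAt (fun t => Real.log t + x * t⁻¹) (k⁻¹ + x * -(k ^ 2)⁻¹) k := h1.add h2
      convert this using 1
      field_simp
      ring
    rw [intervalIntegral.integral_eq_sub_of_hasDerivAt hFTC]
    · have hx0 : x ≠ 0 := ne_of_gt hx
      have hF0 : F₀ ≠ 0 := ne_of_gt hF₀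
      field_simp
      ring
    · apply ContinuousOn.intervalIntegrable
      apply ContinuousOn.div
      · exact (continuous_id.sub continuous_const).continuousOn
      · fun_prop
      · intro k hk
        rw [Set.uIcc_of_le h.le] at hk
        have : 0 < k := lt_of_lt_of_le hx hk.1
        positivity

lemma term_swap {Ω : Type*} [MeasurableSpace Ω] (μ : Measure Ω) [IsProbabilityMeasure μ]
    (G : Ω → ℝ) (hG : Measurable G) (hGpos : ∀ᵐ ω ∂μ, 0 < G ω)
    (f : ℝ → ℝ → ℝ) (hfm : Measurable (Function.uncurry f))
    (hf0 : ∀ k x, 0 ≤ f k x)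
    (s : Set ℝ) (hs : MeasurableSet s) (hsub : s ⊆ Ioi 0)
    (B : Ω → ℝ) (hB : Integrable B μ)
    (hbound : ∀ k ∈ s, ∀ᵐ ω ∂μ, f k (G ω) ≤ B ω)
    (hval : ∀ x, 0 < x → IntegrableOn (fun k => f k x / k ^ 2) s) :
    ∫ k in s, (∫ ω, f k (G ω) ∂μ) / k ^ 2
      = (∫⁻ ω, ENNReal.ofReal (∫ k in s, f k (G ω) / k ^ 2) ∂μ).toReal := by
  have hφ : Measurable fun p : ℝ × Ω => f p.1 (G p.2) := by
    have : (fun p : ℝ × Ω => f p.1 (G p.2))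
        = Function.uncurry f ∘ fun p : ℝ × Ω => (p.1, G p.2) := rfl
    rw [this]
    exact hfm.comp (measurable_fst.prodMk (hG.comp measurable_snd))
  set L : ℝ → ENNReal := fun k => ∫⁻ ω, ENNReal.ofReal (f k (G ω)) ∂μ with hL
  have hLm : Measurable L := (hφ.ennreal_ofReal).lintegral_prod_right'
  have hLfin : ∀ k ∈ s, L k ≠ ⊤ := by
    intro k hk
    have h1 : L k ≤ ∫⁻ ω, ENNReal.ofReal (B ω) ∂μ :=
      lintegral_mono_ae ((hbound k hk).mono fun ω h => ENNReal.ofReal_le_ofReal h)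
    have h2 : ∫⁻ ω, ENNReal.ofReal (B ω) ∂μ < ⊤ := by
      have := hB.hasFiniteIntegral
      rw [hasFiniteIntegral_iff_norm] at this
      refine lt_of_le_of_lt (lintegral_mono fun ω => ?_) this
      exact ENNReal.ofReal_le_ofReal (le_abs_self _)
    exact ne_of_lt (lt_of_le_of_lt h1 h2)
  -- Step 1: inner integral = toReal of L
  have step1 : ∀ k, ∫ ω, f k (G ω) ∂μ = (L k).toReal := by
    intro k
    exact integral_eq_lintegral_of_nonneg_ae (ae_of_all _ fun ω => hf0 k (G ω))
      ((hφ.comp measurable_prodMk_left).aestronglyMeasurable)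
  simp_rw [step1]
  -- Step 2: outer integral to lintegral
  rw [integral_eq_lintegral_of_nonneg_ae
      (ae_of_all _ fun k => div_nonneg ENNReal.toReal_nonneg (sq_nonneg k))
      ((hLm.ennreal_toReal.div (measurable_id'.pow_const 2)).aestronglyMeasurable)]
  congr 1
  calc ∫⁻ k in s, ENNReal.ofReal ((L k).toReal / k ^ 2)
      = ∫⁻ k in s, L k * (ENNReal.ofReal (k ^ 2))⁻¹ := by
        apply setLIntegral_congr_fun hs
        intro k hk
        have hk0 : 0 < k := hsub hk
        dsimp only
        rw [ENNReal.ofReal_div_of_pos (by positivity), ENNReal.ofReal_toReal (hLfin k hk),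
          div_eq_mul_inv]
    _ = ∫⁻ k in s, ∫⁻ ω, ENNReal.ofReal (f k (G ω)) * (ENNReal.ofReal (k ^ 2))⁻¹ ∂μ := by
        apply lintegral_congr fun k => ?_
        exact (lintegral_mul_const _ (hφ.comp measurable_prodMk_left).ennreal_ofReal).symm
    _ = ∫⁻ ω, (∫⁻ k in s, ENNReal.ofReal (f k (G ω)) * (ENNReal.ofReal (k ^ 2))⁻¹) ∂μ := by
        exact lintegral_lintegral_swap (hφ.ennreal_ofReal.mul
          ((measurable_fst.pow_const 2).ennreal_ofReal.inv)).aemeasurable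
    _ = ∫⁻ ω, ENNReal.ofReal (∫ k in s, f k (G ω) / k ^ 2) ∂μ := by
        apply lintegral_congr_ae
        filter_upwards [hGpos] with ω hω
        set x := G ω with hx
        rw [ofReal_integral_eq_lintegral_ofReal (hval x hω)
          (ae_of_all _ fun k => div_nonneg (hf0 k x) (sq_nonneg k))]
        symm
        apply setLIntegral_congr_fun hs
        intro k hk
        have hk0 : 0 < k := hsub hk
        dsimp only
        rw [ENNReal.ofReal_div_of_pos (by positivity), div_eq_mul_inv]

/-- Static replication identity: for an integrable positive random variable `F`
with mean `F₀ > 0` and integrable logarithm, the VIX-type weighted integral of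
out-of-the-money call prices above `F₀` and put prices below `F₀` equals
`ln F₀ − E[ln F]`. -/
theorem stmt_2 {Ω : Type*} [MeasurableSpace Ω] (μ : Measure Ω) [IsProbabilityMeasure μ]
    (F : Ω → ℝ) (hFpos : ∀ᵐ ω ∂μ, 0 < F ω) (hFint : Integrable F μ)
    (hlog : Integrable (fun ω => |Real.log (F ω)|) μ)
    (F₀ : ℝ) (hF₀ : F₀ = ∫ ω, F ω ∂μ) (hF₀pos : 0 < F₀) :
    (∫ k in Ioi F₀, (∫ ω, max (F ω - k) 0 ∂μ) / k ^ 2)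
      + (∫ k in Ioc 0 F₀, (∫ ω, max (k - F ω) 0 ∂μ) / k ^ 2)
      = Real.log F₀ - ∫ ω, Real.log (F ω) ∂μ := by
  obtain ⟨G, hGmeas, hGF⟩ := hFint.aemeasurable
  have hGpos : ∀ᵐ ω ∂μ, 0 < G ω := by
    filter_upwards [hFpos, hGF] with ω h1 h2; rwa [← h2]
  have hGint : Integrable G μ := hFint.congr hGF
  have hGlogabs : Integrable (fun ω => |Real.log (G ω)|) μ :=
    hlog.congr (by filter_upwards [hGF] with ω h; rw [h])
  have hGlogm : AEStronglyMeasurable (fun ω => Real.log (G ω)) μ :=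
    (Real.measurable_log.comp hGmeas).aestronglyMeasurable
  have hGlog : Integrable (fun ω => Real.log (G ω)) μ := by
    rw [← integrable_norm_iff hGlogm]
    simpa [Real.norm_eq_abs] using hGlogabs
  have e1 : ∀ k : ℝ, ∫ ω, max (F ω - k) 0 ∂μ = ∫ ω, max (G ω - k) 0 ∂μ :=
    fun k => integral_congr_ae (hGF.mono fun ω h => by dsimp only; rw [h])
  have e2 : ∀ k : ℝ, ∫ ω, max (k - F ω) 0 ∂μ = ∫ ω, max (k - G ω) 0 ∂μ :=
    fun k => integral_congr_ae (hGF.mono fun ω h => by dsimp only; rw [h])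
  have e3 : ∫ ω, Real.log (F ω) ∂μ = ∫ ω, Real.log (G ω) ∂μ :=
    integral_congr_ae (hGF.mono fun ω h => by dsimp only; rw [h])
  have hGeq : ∫ ω, G ω ∂μ = F₀ := by rw [hF₀]; exact (integral_congr_ae hGF).symm
  simp_rw [e1, e2, e3]
  -- the two payoff value functions
  set c₁ : ℝ → ℝ := fun x => if x ≤ F₀ then 0 else x / F₀ - 1 - Real.log x + Real.log F₀
    with hc₁def
  set c₂ : ℝ → ℝ := fun x => if F₀ ≤ x then 0 else x / F₀ - 1 - Real.log x + Real.log F₀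
    with hc₂def
  have hgnn : ∀ x : ℝ, 0 < x → 0 ≤ x / F₀ - 1 - Real.log x + Real.log F₀ := by
    intro x hx
    have h1 : Real.log (x / F₀) ≤ x / F₀ - 1 := Real.log_le_sub_one_of_pos (by positivity)
    rw [Real.log_div (ne_of_gt hx) (ne_of_gt hF₀pos)] at h1
    linarith
  have hc₁nn : ∀ x : ℝ, 0 < x → 0 ≤ c₁ x := by
    intro x hx
    rw [hc₁def]
    dsimp only
    split
    · exact le_refl 0
    · exact hgnn x hx
  have hc₂nn : ∀ x : ℝ, 0 < x → 0 ≤ c₂ x := by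
    intro x hx
    rw [hc₂def]
    dsimp only
    split
    · exact le_refl 0
    · exact hgnn x hx
  have hsum : ∀ x : ℝ, c₁ x + c₂ x = x / F₀ - 1 - Real.log x + Real.log F₀ := by
    intro x
    rw [hc₁def, hc₂def]
    dsimp only
    rcases lt_trichotomy x F₀ with h | h | h
    · rw [if_pos h.le, if_neg (not_le.mpr h), zero_add]
    · subst h
      rw [if_pos le_rfl, div_self (ne_of_gt hF₀pos)]
      ring
    · rw [if_neg (not_le.mpr h), if_pos h.le, add_zero]
  have hc₁m : Measurable c₁ := by
    apply Measurable.ite (measurableSet_le measurable_id measurable_const) measurable_const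
    exact (((measurable_id.div_const F₀).sub measurable_const).sub Real.measurable_log).add
      measurable_const
  have hc₂m : Measurable c₂ := by
    apply Measurable.ite (measurableSet_le measurable_const measurable_id) measurable_const
    exact (((measurable_id.div_const F₀).sub measurable_const).sub Real.measurable_log).add
      measurable_const
  have hgint : Integrable (fun ω => G ω / F₀ - 1 - Real.log (G ω) + Real.log F₀) μ :=
    (((hGint.div_const F₀).sub (integrable_const 1)).sub hGlog).add (integrable_const _)
  have hc₁int : Integrable (fun ω => c₁ (G ω)) μ := by
    apply Integrable.mono' hgint (hc₁m.comp hGmeas).aestronglyMeasurable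
    filter_upwards [hGpos] with ω hω
    simp only [Function.comp_apply, Real.norm_eq_abs]
    rw [abs_of_nonneg (hc₁nn _ hω)]
    have := hc₂nn _ hω
    have := hsum (G ω)
    linarith
  have hc₂int : Integrable (fun ω => c₂ (G ω)) μ := by
    apply Integrable.mono' hgint (hc₂m.comp hGmeas).aestronglyMeasurable
    filter_upwards [hGpos] with ω hω
    simp only [Function.comp_apply, Real.norm_eq_abs]
    rw [abs_of_nonneg (hc₂nn _ hω)]
    have := hc₁nn _ hω
    have := hsum (G ω)
    linarith
  -- first term
  have term1 : (∫ k in Ioi F₀, (∫ ω, max (G ω - k) 0 ∂μ) / k ^ 2)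
      = ∫ ω, c₁ (G ω) ∂μ := by
    rw [term_swap μ G hGmeas hGpos (fun k x => max (x - k) 0)
      ((measurable_snd.sub measurable_fst).max measurable_const)
      (fun k x => le_max_right _ _) (Ioi F₀) measurableSet_Ioi
      (Ioi_subset_Ioi hF₀pos.le) G hGint
      (fun k hk => by
        filter_upwards [hGpos] with ω hω
        have hk0 : 0 < k := lt_trans hF₀pos (mem_Ioi.mp hk)
        exact max_le (by linarith) hω.le)
      (fun x hx => callIntegrable F₀ x hF₀pos)]
    have : ∫⁻ ω, ENNReal.ofReal (∫ k in Ioi F₀, max (G ω - k) 0 / k ^ 2) ∂μ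
        = ∫⁻ ω, ENNReal.ofReal (c₁ (G ω)) ∂μ := by
      apply lintegral_congr_ae
      filter_upwards [hGpos] with ω hω
      rw [callValue F₀ (G ω) hF₀pos hω, hc₁def]
    rw [this]
    exact (integral_eq_lintegral_of_nonneg_ae
      (by filter_upwards [hGpos] with ω hω; exact hc₁nn _ hω)
      (hc₁m.comp hGmeas).aestronglyMeasurable).symm
  -- second term
  have term2 : (∫ k in Ioc 0 F₀, (∫ ω, max (k - G ω) 0 ∂μ) / k ^ 2)
      = ∫ ω, c₂ (G ω) ∂μ := by
    rw [term_swap μ G hGmeas hGpos (fun k x => max (k - x) 0)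
      ((measurable_fst.sub measurable_snd).max measurable_const)
      (fun k x => le_max_right _ _) (Ioc 0 F₀) measurableSet_Ioc
      (fun k hk => hk.1) (fun _ => F₀) (integrable_const F₀)
      (fun k hk => by
        filter_upwards [hGpos] with ω hω
        exact max_le (by linarith [hk.2]) hF₀pos.le)
      (fun x hx => putIntegrable F₀ x hF₀pos hx)]
    have : ∫⁻ ω, ENNReal.ofReal (∫ k in Ioc 0 F₀, max (k - G ω) 0 / k ^ 2) ∂μ
        = ∫⁻ ω, ENNReal.ofReal (c₂ (G ω)) ∂μ := by
      apply lintegral_congr_ae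
      filter_upwards [hGpos] with ω hω
      rw [putValue F₀ (G ω) hF₀pos hω, hc₂def]
    rw [this]
    exact (integral_eq_lintegral_of_nonneg_ae
      (by filter_upwards [hGpos] with ω hω; exact hc₂nn _ hω)
      (hc₂m.comp hGmeas).aestronglyMeasurable).symm
  rw [term1, term2, ← integral_add hc₁int hc₂int]
  have : ∫ ω, (c₁ (G ω) + c₂ (G ω)) ∂μ
      = ∫ ω, (G ω / F₀ - 1 - Real.log (G ω) + Real.log F₀) ∂μ :=
    integral_congr_ae (ae_of_all _ fun ω => hsum (G ω))
  have h1 : Integrable (fun ω => G ω / F₀ - 1 - Real.log (G ω)) μ :=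
    ((hGint.div_const F₀).sub (integrable_const 1)).sub hGlog
  have h2 : Integrable (fun ω => G ω / F₀ - 1) μ := (hGint.div_const F₀).sub (integrable_const 1)
  rw [this, integral_add h1 (integrable_const _), integral_sub h2 hGlog,
    integral_sub (hGint.div_const F₀) (integrable_const 1), integral_div, hGeq,
    div_self (ne_of_gt hF₀pos), integral_const, integral_const]
  simp
  ring
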